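/- Let κ be an infinite cardinal and let B be the Boolean algebra of regular open subsets of the product space 2^κ (i.e., open sets equal to the interior of their closure), ordered by inclusion; B is the completion of the free Boolean algebra on κ generators. Then for every ultrafilter U on B, every n < ω, and all cardinals κ_0, …, κ_n each of which is either 1 or an infinite regular cardinal, (U,⊇) is not Tukey reducible to the product (∏_{i≤n} κ_i, ≤) with the coordinatewise order (each κ_i carrying its ordinal order). -/

import Mathlib

open Cardinal

/-- A subset `X` of a preorder is cofinal if every element has an upper bound in `X`. -/
def TCofinal {P : Type*} [Preorder P] (X : Set P) : Prop :=
  ∀ p : P, ∃ x ∈ X, p ≤ x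

/-- A map is cofinal if it sends cofinal sets to cofinal sets. -/
def TCofinalMap {P Q : Type*} [Preorder P] [Preorder Q] (f : P → Q) : Prop :=
  ∀ X : Set P, TCofinal X → TCofinal (f '' X)

/-- `P ≤_T Q`: there is a cofinal map from `Q` to `P`. -/
def TukeyLE (P Q : Type*) [Preorder P] [Preorder Q] : Prop :=
  ∃ f : Q → P, TCofinalMap f

/-- Tukey equivalence. -/
def TukeyEquiv (P Q : Type*) [Preorder P] [Preorder Q] : Prop :=
  TukeyLE P Q ∧ TukeyLE Q P

/-- An ultrafilter on the Boolean algebra of regular open subsets of a topological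
space `X` (open sets `s` with `interior (closure s) = s`).  The Boolean operations on
regular opens are: meet = intersection, complement = interior of the set complement,
bottom = `∅`; it is regarded as the partial order `(U,⊇)`. -/
structure ROUltrafilter (X : Type*) [TopologicalSpace X] where
  carrier : Set (Set X)
  regularOpen : ∀ s ∈ carrier, interior (closure s) = s
  empty_not_mem : ∅ ∉ carrier
  inter_mem : ∀ a ∈ carrier, ∀ b ∈ carrier, a ∩ b ∈ carrier
  up_closed : ∀ a ∈ carrier, ∀ b : Set X, interior (closure b) = b → a ⊆ b → b ∈ carrier
  mem_or_compl_mem : ∀ b : Set X, interior (closure b) = b →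
    (b ∈ carrier ∨ interior bᶜ ∈ carrier)

namespace Stmt6Helpers

/-! ### Generic topology lemmas -/

variable {Y : Type*} [TopologicalSpace Y]

lemma reg_of_clopen {s : Set Y} (h : IsClopen s) : interior (closure s) = s := by
  rw [h.isClosed.closure_eq, h.isOpen.interior_eq]

lemma reg_intcl {s : Set Y} (h : IsOpen s) :
    interior (closure (interior (closure s))) = interior (closure s) := by
  have h1 : closure (interior (closure s)) = closure s := by
    apply subset_antisymm
    · exact closure_minimal interior_subset isClosed_closure
    · exact closure_mono (interior_maximal subset_closure h)
  rw [h1]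

lemma reg_int_closed {c : Set Y} (h : IsClosed c) :
    interior (closure (interior c)) = interior c := by
  apply subset_antisymm
  · exact interior_mono (closure_minimal interior_subset h)
  · exact interior_maximal subset_closure isOpen_interior

lemma open_inter_closure {o s : Set Y} (ho : IsOpen o) (h : o ∩ s = ∅) :
    o ∩ closure s = ∅ := by
  have hs : s ⊆ oᶜ := by
    intro x hx hxo
    exact absurd (Set.mem_inter hxo hx) (by simp [h])
  have h2 : closure s ⊆ oᶜ := closure_minimal hs ho.isClosed_compl
  apply Set.eq_empty_iff_forall_notMem.mpr
  rintro x ⟨hx1, hx2⟩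
  exact h2 hx2 hx1

/-! ### Lemmas about `ROUltrafilter` -/

lemma U_open (U : ROUltrafilter Y) {s : Set Y} (h : s ∈ U.carrier) : IsOpen s := by
  rw [← U.regularOpen s h]; exact isOpen_interior

lemma U_nonempty (U : ROUltrafilter Y) {s : Set Y} (h : s ∈ U.carrier) : s.Nonempty := by
  rcases s.eq_empty_or_nonempty with h0 | h0
  · exact absurd (h0 ▸ h) U.empty_not_mem
  · exact h0

lemma U_univ (U : ROUltrafilter Y) : (Set.univ : Set Y) ∈ U.carrier := by
  rcases U.mem_or_compl_mem ∅ (by simp) with h | h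
  · exact absurd h U.empty_not_mem
  · simpa using h

/-! ### Cylinders in `ℕ → Bool` -/

abbrev J : Type := Finset ℕ × Finset ℕ

def Cyl (j : J) : Set (ℕ → Bool) := {y | ∀ i ∈ j.1, y i = decide (i ∈ j.2)}

lemma cyl_nonempty (j : J) : (Cyl j).Nonempty :=
  ⟨fun i => decide (i ∈ j.2), fun _ _ => rfl⟩

lemma coord_open (i : ℕ) (b : Bool) : IsOpen {y : ℕ → Bool | y i = b} := by
  have : {y : ℕ → Bool | y i = b} = (fun y : ℕ → Bool => y i) ⁻¹' ({b} : Set Bool) := by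
    ext y; simp
  rw [this]
  exact (continuous_apply i).isOpen_preimage _ (isOpen_discrete _)

lemma cyl_open (j : J) : IsOpen (Cyl j) := by
  have : Cyl j = ⋂ i ∈ j.1, {y : ℕ → Bool | y i = decide (i ∈ j.2)} := by
    ext y; simp [Cyl]
  rw [this]
  exact isOpen_biInter_finset fun i _ => coord_open i _

lemma cyl_basis {O : Set (ℕ → Bool)} (hO : IsOpen O) {y : ℕ → Bool} (hy : y ∈ O) :
    ∃ j : J, y ∈ Cyl j ∧ Cyl j ⊆ O := by
  obtain ⟨I, u, h1, h2⟩ := isOpen_pi_iff.mp hO y hy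
  refine ⟨(I, I.filter (fun i => y i = true)), ?_, ?_⟩
  · intro i hi
    simp only [Finset.mem_filter]
    cases h : y i <;> simp [hi, h]
  · intro z hz
    apply h2
    intro i hi
    have hi' : i ∈ I := hi
    have hzy : z i = y i := by
      rw [hz i hi']
      by_cases h : y i = true
      · simp [Finset.mem_filter, hi', h]
      · simp only [Bool.not_eq_true] at h
        simp [Finset.mem_filter, h]
    rw [hzy]
    exact (h1 i hi').2

lemma cyl_split (j : J) : ∃ j1 j2 : J,
    Cyl j1 ⊆ Cyl j ∧ Cyl j2 ⊆ Cyl j ∧ Cyl j1 ∩ Cyl j2 = ∅ := by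
  set c := j.1.sup id + 1 with hc_def
  have hc : c ∉ j.1 := by
    intro h
    have := Finset.le_sup (f := id) h
    simp only [id] at this
    omega
  refine ⟨(insert c j.1, j.2.erase c), (insert c j.1, insert c j.2), ?_, ?_, ?_⟩
  · intro y hy i hi
    have := hy i (Finset.mem_insert_of_mem hi)
    have hne : i ≠ c := fun h => hc (h ▸ hi)
    simpa [Finset.mem_erase, hne] using this
  · intro y hy i hi
    have := hy i (Finset.mem_insert_of_mem hi)
    have hne : i ≠ c := fun h => hc (h ▸ hi)
    simpa [Finset.mem_insert, hne] using this
  · apply Set.eq_empty_iff_forall_notMem.mpr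
    rintro y ⟨hy1, hy2⟩
    have e1 := hy1 c (Finset.mem_insert_self _ _)
    have e2 := hy2 c (Finset.mem_insert_self _ _)
    simp [Finset.mem_erase] at e1
    simp [Finset.mem_insert] at e2
    rw [e1] at e2
    exact Bool.false_ne_true e2

/-! ### The projection `2^ι → 2^ℕ` -/

variable {ι : Type*} (e : ℕ ↪ ι)

def projE (e : ℕ ↪ ι) : (ι → Bool) → (ℕ → Bool) := fun x n => x (e n)

lemma projE_continuous : Continuous (projE e) :=
  continuous_pi fun n => continuous_apply (e n)

lemma projE_surjective : Function.Surjective (projE e) := by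
  intro y
  classical
  refine ⟨fun i => if h : ∃ n, e n = i then y h.choose else false, ?_⟩
  funext n
  have h : ∃ m, e m = e n := ⟨n, rfl⟩
  have hm : h.choose = n := e.injective h.choose_spec
  simp only [projE, dif_pos h, hm]

lemma projE_isOpenMap : IsOpenMap (projE e) := by
  classical
  apply IsOpenMap.of_nhds_le
  intro x A hA
  rw [Filter.mem_map] at hA
  obtain ⟨O, hOsub, hOopen, hxO⟩ := mem_nhds_iff.mp hA
  obtain ⟨I, u, h1, h2⟩ := isOpen_pi_iff.mp hOopen x hxO
  set B : Set (ℕ → Bool) := {y | ∀ n : ℕ, e n ∈ I → y n = x (e n)} with hB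
  have hBopen : IsOpen B := by
    have : B = ⋂ n ∈ (I.preimage e (e.injective.injOn)), {y : ℕ → Bool | y n = x (e n)} := by
      ext y
      simp only [hB, Set.mem_iInter, Set.mem_setOf_eq, Finset.mem_preimage]
    rw [this]
    exact isOpen_biInter_finset fun n _ => coord_open n _
  have hBx : projE e x ∈ B := fun n _ => rfl
  have hBA : B ⊆ A := by
    intro y hy
    set x' : ι → Bool := fun i => if h : ∃ n, e n = i then y h.choose else x i with hx'
    have hproj : projE e x' = y := by
      funext n
      have h : ∃ m, e m = e n := ⟨n, rfl⟩
      have hm : h.choose = n := e.injective h.choose_spec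
      simp only [projE, hx', dif_pos h, hm]
    have hx'pi : x' ∈ (↑I : Set ι).pi u := by
      intro i hi
      have hiI : i ∈ I := hi
      by_cases h : ∃ n, e n = i
      · have hxy : x' i = x i := by
          have he : e h.choose = i := h.choose_spec
          have : y h.choose = x (e h.choose) := hy h.choose (by rw [he]; exact hiI)
          simp only [hx', dif_pos h, this, he]
        rw [hxy]; exact (h1 i hiI).2
      · simp only [hx', dif_neg h]; exact (h1 i hiI).2
    have hO' : x' ∈ O := h2 hx'pi
    have hA' : x' ∈ projE e ⁻¹' A := hOsub hO'
    rw [Set.mem_preimage, hproj] at hA'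
    exact hA'
  exact Filter.mem_of_superset (hBopen.mem_nhds hBx) hBA

/-! ### Bounding countable families in a regular uncountable cardinal -/

universe u

lemma bound_of_countable {κc : Cardinal.{u}} (hreg : κc.IsRegular) (hgt : ℵ₀ < κc)
    {α : Type} [Countable α] (r : α → κc.ord.ToType) : ∃ z, ∀ i, r i ≤ z := by
  haveI : IsWellOrder κc.ord.ToType ((·<·) : κc.ord.ToType → κc.ord.ToType → Prop) :=
    isWellOrder_lt
  by_contra hcon
  push_neg at hcon
  have hunb : IsCofinal (Set.range r) := by
    intro a
    obtain ⟨i, hi⟩ := hcon a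
    exact ⟨r i, Set.mem_range_self i, le_of_lt hi⟩
  have h1 := Order.cof_le hunb
  rw [Ordinal.cof_toType] at h1
  rw [hreg.cof_ord] at h1
  have h2 : #(Set.range r) ≤ ℵ₀ := by
    have hcr : (Set.range r).Countable := Set.countable_range r
    haveI := hcr.to_subtype
    exact Cardinal.mk_le_aleph0
  exact absurd (h1.trans h2) (not_le.mpr hgt)

end Stmt6Helpers

open Stmt6Helpers in
/-- Let `κ` be infinite and let `B` be the algebra of regular open subsets
of `2^κ` (the completion of the free Boolean algebra on `κ` generators).  Then no
ultrafilter `(U,⊇)` on `B` is Tukey reducible to a finite product `∏_{i≤n} κᵢ` of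
cardinals each of which is `1` or an infinite regular cardinal, with the coordinatewise
order (each `κᵢ` carrying its ordinal order). -/
theorem stmt6 (κ : Cardinal) (hκ : ℵ₀ ≤ κ)
    (U : ROUltrafilter (κ.ord.ToType → Bool)) (n : ℕ)
    (κs : Fin (n + 1) → Cardinal)
    (hκs : ∀ i, κs i = 1 ∨ (ℵ₀ ≤ κs i ∧ (κs i).IsRegular)) :
    ¬TukeyLE ((↥U.carrier)ᵒᵈ) ((i : Fin (n + 1)) → (κs i).ord.ToType) := by
  classical
  rintro ⟨f, hf⟩
  let X : Type _ := κ.ord.ToType → Bool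
  let Q : Type _ := (i : Fin (n + 1)) → (κs i).ord.ToType
  -- basic nonemptiness
  have hκs0 : ∀ i, κs i ≠ 0 := by
    intro i
    rcases hκs i with h | ⟨h, _⟩
    · rw [h]; exact one_ne_zero
    · intro h0; rw [h0] at h
      exact Cardinal.aleph0_ne_zero (le_antisymm (zero_le (a := _)) h).symm
  have hne : ∀ i, Nonempty ((κs i).ord.ToType) := by
    intro i
    apply Ordinal.toType_nonempty_iff_ne_zero.mpr
    intro h
    apply hκs0 i
    rw [← Cardinal.card_ord (κs i), h, Ordinal.card_zero]
  haveI hQne : Nonempty Q := ⟨fun i => (hne i).some⟩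
  -- the underlying set of an element of the dual subtype
  set val : ((↥U.carrier)ᵒᵈ) → Set X := fun p => (OrderDual.ofDual p).1 with hvaldef
  have hval_mem : ∀ p, val p ∈ U.carrier := fun p => (OrderDual.ofDual p).2
  -- Step A : Tukey-style function
  have claim : ∀ s : Set X, s ∈ U.carrier → ∃ q0 : Q, ∀ q, q0 ≤ q → val (f q) ⊆ s := by
    intro s hs
    by_contra hcon
    push_neg at hcon
    have hcof : TCofinal {q : Q | ¬ val (f q) ⊆ s} := by
      intro q0
      obtain ⟨q, h1, h2⟩ := hcon q0
      exact ⟨q, h2, h1⟩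
    obtain ⟨x, hx, hle⟩ := hf _ hcof (OrderDual.toDual ⟨s, hs⟩)
    obtain ⟨q, hq, rfl⟩ := hx
    exact hq (show val (f q) ⊆ s from hle)
  choose qf0 hqf0 using claim
  set qf : Set X → Q := fun s => if h : s ∈ U.carrier then qf0 s h else Classical.arbitrary Q
    with hqfdef
  have hqf : ∀ s (hs : s ∈ U.carrier) (q : Q), qf s ≤ q → val (f q) ⊆ s := by
    intro s hs q h
    have heq : qf s = qf0 s hs := dif_pos hs
    exact hqf0 s hs q (heq ▸ h)
  -- the countable coordinate block
  haveI hinf : Infinite κ.ord.ToType := by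
    rw [Cardinal.infinite_iff, Cardinal.mk_toType, Cardinal.card_ord]; exact hκ
  set e : ℕ ↪ κ.ord.ToType := Infinite.natEmbedding _ with hedef
  set π : X → (ℕ → Bool) := projE e with hπdef
  have hπc : Continuous π := projE_continuous e
  have hπo : IsOpenMap π := projE_isOpenMap e
  have hint : ∀ s : Set (ℕ → Bool), π ⁻¹' (interior s) = interior (π ⁻¹' s) :=
    fun s => hπo.preimage_interior_eq_interior_preimage hπc s
  have hcl : ∀ s : Set (ℕ → Bool), π ⁻¹' (closure s) = closure (π ⁻¹' s) :=
    fun s => hπo.preimage_closure_eq_closure_preimage hπc s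
  have hregpre : ∀ v : Set (ℕ → Bool), interior (closure v) = v →
      interior (closure (π ⁻¹' v)) = π ⁻¹' v := by
    intro v hv
    rw [← hcl, ← hint, hv]
  -- preimages of coordinate sets are clopen
  have hcoordpre : ∀ (m : ℕ) (b : Bool), IsClopen (π ⁻¹' {y : ℕ → Bool | y m = b}) := by
    intro m b
    have h1 : π ⁻¹' {y : ℕ → Bool | y m = b} = (fun x : X => x (e m)) ⁻¹' ({b} : Set Bool) := by
      ext x; simp [hπdef, projE]
    rw [h1]
    exact (isClopen_discrete _).preimage (continuous_apply (e m))
  -- the generic branch chosen by U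
  have hbase : ∀ m : ℕ, ∃ b : Bool, (π ⁻¹' {y : ℕ → Bool | y m = b}) ∈ U.carrier := by
    intro m
    rcases U.mem_or_compl_mem _ (reg_of_clopen (hcoordpre m true)) with h | h
    · exact ⟨true, h⟩
    · refine ⟨false, ?_⟩
      have hc : (π ⁻¹' {y : ℕ → Bool | y m = true})ᶜ = π ⁻¹' {y : ℕ → Bool | y m = false} := by
        ext x; simp [hπdef, projE, Bool.not_eq_true]
      rw [hc, (hcoordpre m false).isOpen.interior_eq] at h
      exact h
  choose tDec htDec using hbase
  set Dset : ℕ → Set (ℕ → Bool) := fun M => {y | ∀ i < M, y i = tDec i} with hDdef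
  set Wset : ℕ → Set (ℕ → Bool) := fun m => {y | (∀ i < m, y i = tDec i) ∧ y m = !(tDec m)}
    with hWdef
  have hDopen : ∀ M, IsOpen (Dset M) := by
    intro M
    have : Dset M = ⋂ i ∈ Finset.range M, {y : ℕ → Bool | y i = tDec i} := by
      ext y; simp [hDdef, Finset.mem_range]
    rw [this]
    exact isOpen_biInter_finset fun i _ => coord_open i _
  have hWopen : ∀ m, IsOpen (Wset m) := by
    intro m
    have : Wset m = Dset m ∩ {y : ℕ → Bool | y m = !(tDec m)} := by
      ext y; simp [hWdef, hDdef]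
    rw [this]
    exact (hDopen m).inter (coord_open m _)
  have hDmem : ∀ M, π ⁻¹' (Dset M) ∈ U.carrier := by
    intro M
    induction M with
    | zero =>
        have : Dset 0 = Set.univ := by ext y; simp [hDdef]
        rw [this, Set.preimage_univ]
        exact U_univ U
    | succ M ih =>
        have hsplit : Dset (M + 1) = Dset M ∩ {y : ℕ → Bool | y M = tDec M} := by
          ext y
          simp only [hDdef, Set.mem_setOf_eq, Set.mem_inter_iff]
          constructor
          · intro h
            exact ⟨fun i hi => h i (Nat.lt_succ_of_lt hi), h M (Nat.lt_succ_self M)⟩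
          · rintro ⟨h1, h2⟩ i hi
            rcases Nat.lt_succ_iff_lt_or_eq.mp hi with h | h
            · exact h1 i h
            · rw [h]; exact h2
        rw [hsplit, Set.preimage_inter]
        exact U.inter_mem _ ih _ (htDec M)
  have hWdisj : ∀ m m', m < m' → Wset m ∩ Wset m' = ∅ := by
    intro m m' hmm'
    apply Set.eq_empty_iff_forall_notMem.mpr
    rintro y ⟨⟨_, h2⟩, ⟨h3, _⟩⟩
    have := h3 m hmm'
    rw [this] at h2
    exact Bool.not_ne_self (tDec m) h2.symm
  -- the countable index for the pieces
  let smallT : Type _ := (sm : {i : Fin (n + 1) // κs i ≤ ℵ₀}) → (κs sm.1).ord.ToType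
  haveI hcf : ∀ sm : {i : Fin (n + 1) // κs i ≤ ℵ₀}, Countable ((κs sm.1).ord.ToType) := by
    intro sm
    apply Cardinal.mk_le_aleph0_iff.mp
    rw [Cardinal.mk_toType, Cardinal.card_ord]
    exact sm.2
  haveI hTc : Countable smallT := inferInstance
  haveI hTne : Nonempty smallT := ⟨fun sm => (hne sm.1).some⟩
  let projQ : Q → smallT := fun q sm => q sm.1
  let BB : smallT → Set (Set (ℕ → Bool)) := fun t =>
    {v | interior (closure v) = v ∧ π ⁻¹' v ∈ U.carrier ∧ projQ (qf (π ⁻¹' v)) = t}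
  -- construction of the countable family of lower bounds
  have hvst : ∀ t : smallT, ∃ v : Set (ℕ → Bool),
      IsOpen v ∧ π ⁻¹' v ∈ U.carrier ∧ ∀ w' ∈ BB t, v ⊆ w' := by
    intro t
    rcases Set.eq_empty_or_nonempty (BB t) with hBB | ⟨v₀, hv₀⟩
    · refine ⟨Set.univ, isOpen_univ, by rw [Set.preimage_univ]; exact U_univ U, ?_⟩
      intro w' hw'
      rw [hBB] at hw'
      exact absurd hw' (Set.notMem_empty _)
    · have hW : ∀ j : J, ∃ w', w' ∈ BB t ∧
          ((∃ v' ∈ BB t, ¬ Cyl j ⊆ v') → ¬ Cyl j ⊆ w') := by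
        intro j
        by_cases hj : ∃ v' ∈ BB t, ¬ Cyl j ⊆ v'
        · obtain ⟨v', h1, h2⟩ := hj
          exact ⟨v', h1, fun _ => h2⟩
        · exact ⟨v₀, hv₀, fun h => absurd h hj⟩
      choose W hW1 hW2 using hW
      -- bound the q-values of the family W in Q
      have hbig : ∀ idx : Fin (n + 1), ¬ (κs idx ≤ ℵ₀) →
          ∃ z, ∀ j : J, qf (π ⁻¹' W j) idx ≤ z := by
        intro idx hidx
        rcases hκs idx with h1 | ⟨_, h3⟩
        · exact absurd (h1 ▸ Cardinal.one_lt_aleph0.le) hidx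
        · exact bound_of_countable h3 (not_le.mp hidx) _
      choose zf hzf using hbig
      set qb : Q := fun idx => if h : κs idx ≤ ℵ₀ then t ⟨idx, h⟩ else zf idx h with hqb
      have hle : ∀ j : J, qf (π ⁻¹' W j) ≤ qb := by
        intro j idx
        by_cases h : κs idx ≤ ℵ₀
        · have hproj := (hW1 j).2.2
          have heq : qf (π ⁻¹' W j) idx = t ⟨idx, h⟩ := congrFun hproj ⟨idx, h⟩
          rw [hqb]
          simp only [dif_pos h]
          exact le_of_eq heq
        · rw [hqb]
          simp only [dif_neg h]
          exact hzf idx h j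
      set u : Set X := val (f qb) with hu
      have humem : u ∈ U.carrier := hval_mem _
      have husub : ∀ j : J, u ⊆ π ⁻¹' W j := fun j => hqf _ (hW1 j).2.1 qb (hle j)
      have huopen : IsOpen u := U_open U humem
      set vb : Set (ℕ → Bool) := interior (closure (π '' u)) with hvb
      have hvbopen : IsOpen vb := isOpen_interior
      have hvbreg : interior (closure vb) = vb := reg_intcl (hπo u huopen)
      have hsub2 : u ⊆ π ⁻¹' vb := by
        intro x hx
        exact interior_maximal subset_closure (hπo u huopen) (Set.mem_image_of_mem _ hx)
      have hvbmem : π ⁻¹' vb ∈ U.carrier :=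
        U.up_closed u humem _ (hregpre vb hvbreg) hsub2
      refine ⟨vb, hvbopen, hvbmem, ?_⟩
      intro w' hw'
      by_contra hns
      obtain ⟨z, hz1, hz2⟩ := Set.not_subset.mp hns
      obtain ⟨j, hj1, hj2⟩ := cyl_basis hvbopen hz1
      have hnot : ∃ v' ∈ BB t, ¬ Cyl j ⊆ v' := ⟨w', hw', fun h => hz2 (h hj1)⟩
      apply hW2 j hnot
      refine hj2.trans ?_
      have himg : π '' u ⊆ W j := Set.image_subset_iff.mpr (husub j)
      calc vb ⊆ interior (closure (W j)) := interior_mono (closure_mono himg)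
        _ = W j := (hW1 j).1
  choose vst hvst1 hvst2 hvst3 using hvst
  obtain ⟨σe, hσe⟩ := exists_surjective_nat smallT
  set vv : ℕ → Set (ℕ → Bool) := fun k => vst (σe k) with hvvdef
  -- the step lemma: inside each `vv k` and beyond any level `M` we find a pair of
  -- disjoint cylinders inside a single `Wset` level
  have hboolne : ∀ a b : Bool, a ≠ b → a = !b := by decide
  have hstep : ∀ M k : ℕ, ∃ r : ℕ × J × J, M ≤ r.1 ∧
      Cyl r.2.1 ⊆ vv k ∩ Wset r.1 ∧ Cyl r.2.2 ⊆ vv k ∩ Wset r.1 ∧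
      Cyl r.2.1 ∩ Cyl r.2.2 = ∅ := by
    intro M k
    have hγmem : π ⁻¹' (vv k ∩ Dset M) ∈ U.carrier := by
      rw [Set.preimage_inter]
      exact U.inter_mem _ (hvst2 _) _ (hDmem M)
    have hγne : (vv k ∩ Dset M).Nonempty := by
      obtain ⟨x, hx⟩ := U_nonempty U hγmem
      exact ⟨π x, hx⟩
    have hγopen : IsOpen (vv k ∩ Dset M) := (hvst1 _).inter (hDopen M)
    obtain ⟨y₀, hy₀⟩ := hγne
    obtain ⟨j, hj1, hj2⟩ := cyl_basis hγopen hy₀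
    set m1 : ℕ := max (j.1.sup id + 1) M with hm1
    have hm1j : m1 ∉ j.1 := by
      intro h
      have := Finset.le_sup (f := id) h
      simp only [id] at this
      omega
    set y : ℕ → Bool := fun i => if i ∈ j.1 then y₀ i else if i = m1 then !(tDec i) else tDec i
      with hy
    have hyCyl : y ∈ Cyl j := by
      intro i hi
      rw [hy]
      simp only [if_pos hi]
      exact hj1 i hi
    have hyγ : y ∈ vv k ∩ Dset M := hj2 hyCyl
    have hdev : ∃ i, y i ≠ tDec i := by
      refine ⟨m1, ?_⟩
      rw [hy]
      simp only [if_neg hm1j, if_pos rfl]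
      exact Bool.not_ne_self (tDec m1)
    have hspec := Nat.find_spec hdev
    have hmin : ∀ i < Nat.find hdev, y i = tDec i := by
      intro i hi
      have := Nat.find_min hdev hi
      exact not_not.mp this
    have hm'M : M ≤ Nat.find hdev := by
      by_contra h
      push_neg at h
      exact hspec (hyγ.2 _ h)
    have hyW : y ∈ Wset (Nat.find hdev) := ⟨hmin, hboolne _ _ hspec⟩
    have hopen2 : IsOpen (vv k ∩ Wset (Nat.find hdev)) := (hvst1 _).inter (hWopen _)
    obtain ⟨j', hj'1, hj'2⟩ := cyl_basis hopen2 ⟨hyγ.1, hyW⟩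
    obtain ⟨j1, j2, h1, h2, h3⟩ := cyl_split j'
    exact ⟨(Nat.find hdev, j1, j2), hm'M, h1.trans hj'2, h2.trans hj'2, h3⟩
  choose stp hstp1 hstp2 hstp3 hstp4 using hstep
  -- recursive choice of levels and cylinders
  set F : ℕ → ℕ × J × J :=
    fun k => Nat.rec (stp 0 0) (fun k1 prev => stp (prev.1 + 1) (k1 + 1)) k with hFdef
  have hFs : ∀ k, F (k + 1) = stp ((F k).1 + 1) (k + 1) := fun k => rfl
  have hFa : ∀ k, Cyl (F k).2.1 ⊆ vv k ∩ Wset (F k).1 := by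
    intro k
    cases k with
    | zero => exact hstp2 0 0
    | succ k => rw [hFs k]; exact hstp2 _ _
  have hFb : ∀ k, Cyl (F k).2.2 ⊆ vv k ∩ Wset (F k).1 := by
    intro k
    cases k with
    | zero => exact hstp3 0 0
    | succ k => rw [hFs k]; exact hstp3 _ _
  have hFd : ∀ k, Cyl (F k).2.1 ∩ Cyl (F k).2.2 = ∅ := by
    intro k
    cases k with
    | zero => exact hstp4 0 0
    | succ k => rw [hFs k]; exact hstp4 _ _
  have hFmono : StrictMono (fun k => (F k).1) := by
    apply strictMono_nat_of_lt_succ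
    intro k
    have := hstp1 ((F k).1 + 1) (k + 1)
    rw [hFs k]
    omega
  -- the diagonal regular open set
  set bigU : Set (ℕ → Bool) := ⋃ k, Cyl (F k).2.1 with hbigU
  have hbigUopen : IsOpen bigU := isOpen_iUnion fun k => cyl_open _
  set w : Set (ℕ → Bool) := interior (closure bigU) with hwdef
  have hwreg : interior (closure w) = w := reg_intcl hbigUopen
  have hwopen : IsOpen w := isOpen_interior
  -- each b-cylinder misses bigU
  have hbmiss : ∀ k, Cyl (F k).2.2 ∩ bigU = ∅ := by
    intro k
    apply Set.eq_empty_iff_forall_notMem.mpr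
    rintro z ⟨hz1, hz2⟩
    obtain ⟨k', hz2⟩ := Set.mem_iUnion.mp hz2
    rcases lt_trichotomy k k' with h | h | h
    · have hlev : (F k).1 < (F k').1 := hFmono h
      have h1 := (hFb k hz1).2
      have h2 := (hFa k' hz2).2
      have := hWdisj _ _ hlev
      exact absurd (Set.mem_inter h1 h2) (by rw [this]; exact Set.notMem_empty z)
    · subst h
      exact absurd (Set.mem_inter hz2 hz1) (by rw [hFd k]; exact Set.notMem_empty z)
    · have hlev : (F k').1 < (F k).1 := hFmono h
      have h1 := (hFa k' hz2).2
      have h2 := (hFb k hz1).2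
      have := hWdisj _ _ hlev
      exact absurd (Set.mem_inter h1 h2) (by rw [this]; exact Set.notMem_empty z)
  -- final case analysis
  rcases U.mem_or_compl_mem (π ⁻¹' w) (hregpre w hwreg) with hc | hc
  · -- `w` itself is in the ultrafilter
    obtain ⟨k, hk⟩ := hσe (projQ (qf (π ⁻¹' w)))
    have hvw : vv k ⊆ w := by
      apply hvst3 (σe k) w
      exact ⟨hwreg, hc, by rw [hk]⟩
    obtain ⟨y, hy⟩ := cyl_nonempty (F k).2.2
    have hyw : y ∈ w := hvw (hFb k hy).1
    have hycl : y ∈ closure bigU := interior_subset hyw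
    have := open_inter_closure (cyl_open (F k).2.2) (hbmiss k)
    exact absurd (Set.mem_inter hy hycl) (by rw [this]; exact Set.notMem_empty y)
  · -- the complement is in the ultrafilter
    have hcompl : interior ((π ⁻¹' w)ᶜ) = π ⁻¹' (interior wᶜ) := by
      rw [← Set.preimage_compl, hint]
    rw [hcompl] at hc
    set w' : Set (ℕ → Bool) := interior wᶜ with hw'def
    have hw'reg : interior (closure w') = w' := reg_int_closed hwopen.isClosed_compl
    obtain ⟨k, hk⟩ := hσe (projQ (qf (π ⁻¹' w')))
    have hvw : vv k ⊆ w' := by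
      apply hvst3 (σe k) w'
      exact ⟨hw'reg, hc, by rw [hk]⟩
    obtain ⟨y, hy⟩ := cyl_nonempty (F k).2.1
    have h1 : y ∈ wᶜ := interior_subset (hvw (hFa k hy).1)
    have h2 : y ∈ w := by
      have hsub : Cyl (F k).2.1 ⊆ w :=
        interior_maximal ((Set.subset_iUnion (fun k => Cyl (F k).2.1) k).trans subset_closure)
          (cyl_open _)
      exact hsub hy
    exact h1 h2
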